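/- Proposition (law of the system disturbance, equation (eqnytu)): For a non-controllable FSC with a source in 𝒫_v(u,u) (0 ≤ u ≤ v), let t satisfy u+1 ≤ t ≤ N and let y^{t-u-1} be an output history with Pr(Y^{t-u-1} = y^{t-u-1}) > 0. Then for every y ∈ 𝒴: Pr(Y_{t-u} = y | Y^{t-u-1} = y^{t-u-1}) = Σ_{x_{t-v}^t, s_{t-v-1}^{t-u}} α_{t-1}(x_{t-v}^{t-1}, s_{t-v-1}^{t-u-1}) · π_t(x_t | x_{t-v}^{t-1}, s_{t-v-1}^{t-u-1}, y^{t-u-1}) · W(y, s_{t-u} | x_{t-u}, s_{t-u-1}) (windows truncated for small indices). In particular, the conditional law of Y_{t-u} given the past outputs is determined by the a posteriori vector α_{t-1}, the time-t policy, and the channel law alone. -/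

import Mathlib

/-!
Common framework: finite-state channels (FSCs), non-controllable FSCs,
sources with delayed feedback (FB) and delayed state information (SI),
induced joint pmfs, conditional probabilities and conditional mutual
information, following Huang–Kavčić–Ma, "Upper Bounds on the Capacities of
Non-Controllable Finite-State Channels with/without Feedback".

Time convention: for a horizon `N`, the channel inputs are `X_1,…,X_N`
(coordinate `x i` of `x : Fin N → X` is `X_{i+1}`), the states are
`S_0,…,S_N` (coordinate `s j` of `s : Fin (N+1) → S` is `S_j`), and the
outputs are `Y_1,…,Y_N` (coordinate `y i` is `Y_{i+1}`).
-/

open Finset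

noncomputable section

namespace FSCPaper

/-- Probability of an event under a pmf `p` on a finite sample space. -/
def prE {Ω : Type} [Fintype Ω] (p : Ω → ℝ) (E : Set Ω) : ℝ :=
  ∑ ω : Ω, E.indicator p ω

/-- Conditional probability `Pr(E | F)`, a ratio of (sums of) marginals
(with the `0/0 = 0` junk-value convention of real division). -/
def condPr {Ω : Type} [Fintype Ω] (p : Ω → ℝ) (E F : Set Ω) : ℝ :=
  prE p (E ∩ F) / prE p F

/-- The conditional pmf `Pr(· | F)` given an event `F`. -/
def condPMF {Ω : Type} [Fintype Ω] (p : Ω → ℝ) (F : Set Ω) : Ω → ℝ :=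
  fun ω => F.indicator p ω / prE p F

/-- Conditional mutual information `I(A;B|C)` of finite-valued random
variables `fA, fB, fC` under the pmf `p`; zero-probability terms
contribute `0` (the factor in front of the logarithm vanishes). -/
def condMI {Ω A B C : Type} [Fintype Ω] [Fintype A] [Fintype B] [Fintype C]
    (p : Ω → ℝ) (fA : Ω → A) (fB : Ω → B) (fC : Ω → C) : ℝ :=
  ∑ a : A, ∑ b : B, ∑ c : C,
    prE p {ω | fA ω = a ∧ fB ω = b ∧ fC ω = c} *
      Real.log (condPr p {ω | fA ω = a ∧ fB ω = b} {ω | fC ω = c} /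
        (condPr p {ω | fA ω = a} {ω | fC ω = c} *
          condPr p {ω | fB ω = b} {ω | fC ω = c}))

/-- Trajectories `(x_1^N, s_0^N, y_1^N)`. -/
abbrev Traj (X S Y : Type) (N : ℕ) : Type :=
  (Fin N → X) × (Fin (N + 1) → S) × (Fin N → Y)

/-- A general finite-state channel: channel transition kernel
`W(y, s' | x, s)` (a pmf on `Y × S` for each `(x,s)`) and initial state
pmf `init`. -/
structure FSC (X S Y : Type) [Fintype S] [Fintype Y] : Type where
  W : Y → S → X → S → ℝ
  init : S → ℝ
  W_nonneg : ∀ y s' x s, 0 ≤ W y s' x s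
  W_sum : ∀ x s, (∑ y : Y, ∑ s' : S, W y s' x s) = 1
  init_nonneg : ∀ s, 0 ≤ init s
  init_sum : (∑ s : S, init s) = 1

/-- A source without feedback: conditional pmfs `π_t(x_t | x^{t-1})`;
`pol t x a` is the probability that `X_{t+1} = a` given that the previous
inputs are the corresponding coordinates of `x` (by `causal` it depends
only on the coordinates `x j` with `j < t`). -/
structure FFSource (X : Type) [Fintype X] (N : ℕ) : Type where
  pol : Fin N → (Fin N → X) → X → ℝ
  nonneg : ∀ t x a, 0 ≤ pol t x a
  sum_one : ∀ t x, (∑ a : X, pol t x a) = 1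
  causal : ∀ (t : Fin N) (x x' : Fin N → X),
    (∀ j : Fin N, (j : ℕ) < (t : ℕ) → x j = x' j) → pol t x = pol t x'

/-- A non-controllable finite-state channel: output kernel `P(y|x,s)`,
free state-transition kernel `Q(s'|s)`, and initial state pmf `init`. -/
structure NCFSC (X S Y : Type) [Fintype S] [Fintype Y] : Type where
  P : Y → X → S → ℝ
  Q : S → S → ℝ
  init : S → ℝ
  P_nonneg : ∀ y x s, 0 ≤ P y x s
  P_sum : ∀ x s, (∑ y : Y, P y x s) = 1
  Q_nonneg : ∀ s' s, 0 ≤ Q s' s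
  Q_sum : ∀ s, (∑ s' : S, Q s' s) = 1
  init_nonneg : ∀ s, 0 ≤ init s
  init_sum : (∑ s : S, init s) = 1

/-- A source with `u`-delayed feedback and `u`-delayed state information
(the set `𝒫(u,u)`): `pol t x s y a` is
`π_{t+1}(a | x^{t}, s_0^{t-u}, y^{t-u})` in 1-based time; by `causal` it
depends on `(x, s, y)` only through the coordinates
`x_1^{t}` (indices `j < t`), `s_0^{t-u}` (indices `j + u ≤ t`) and
`y_1^{t-u}` (indices `j + u + 1 ≤ t`), i.e. on the past inputs, the
`u`-delayed state information and the `u`-delayed output feedback. -/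
structure Source (X S Y : Type) [Fintype X] [Fintype S] [Fintype Y] (N u : ℕ) : Type where
  pol : Fin N → (Fin N → X) → (Fin (N + 1) → S) → (Fin N → Y) → X → ℝ
  nonneg : ∀ t x s y a, 0 ≤ pol t x s y a
  sum_one : ∀ t x s y, (∑ a : X, pol t x s y a) = 1
  causal : ∀ (t : Fin N) (x x' : Fin N → X) (s s' : Fin (N + 1) → S) (y y' : Fin N → Y),
    (∀ j : Fin N, (j : ℕ) < (t : ℕ) → x j = x' j) →
    (∀ j : Fin (N + 1), (j : ℕ) + u ≤ (t : ℕ) → s j = s' j) →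
    (∀ j : Fin N, (j : ℕ) + u + 1 ≤ (t : ℕ) → y j = y' j) →
    pol t x s y = pol t x' s' y'

variable {X S Y : Type} [Fintype X] [Fintype S] [Fintype Y]

/-- Joint pmf induced by a general FSC and a feedforward source:
`Pr(x^N, s_0^N, y^N) = μ(s_0) ∏_t π_t(x_t|x^{t-1}) W(y_t, s_t | x_t, s_{t-1})`. -/
def jointP0 {N : ℕ} (ch : FSC X S Y) (src : FFSource X N) (ω : Traj X S Y N) : ℝ :=
  ch.init (ω.2.1 0) *
    ∏ i : Fin N,
      src.pol i ω.1 (ω.1 i) *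
        ch.W (ω.2.2 i) (ω.2.1 i.succ) (ω.1 i) (ω.2.1 i.castSucc)

/-- Joint channel transition `W(y, s' | x, s) = P(y|x,s) · Q(s'|s)` of a
non-controllable FSC. -/
def NCFSC.W (ch : NCFSC X S Y) (y : Y) (s' : S) (x : X) (s : S) : ℝ :=
  ch.P y x s * ch.Q s' s

/-- Joint pmf induced by a non-controllable FSC and a source in `𝒫(u,u)`:
`Pr(x^N, s_0^N, y^N) = μ(s_0) ∏_t π_t(x_t|x^{t-1},s_0^{t-u-1},y^{t-u-1}) W(y_t,s_t|x_t,s_{t-1})`. -/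
def jointP {N u : ℕ} (ch : NCFSC X S Y) (src : Source X S Y N u) (ω : Traj X S Y N) : ℝ :=
  ch.init (ω.2.1 0) *
    ∏ i : Fin N,
      src.pol i ω.1 ω.2.1 ω.2.2 (ω.1 i) *
        ch.W (ω.2.2 i) (ω.2.1 i.succ) (ω.1 i) (ω.2.1 i.castSucc)

/-- A source in `𝒫(u,u)` is a `v`-th order conditional Markov source
(the set `𝒫_v(u,u)`) if each policy depends on its arguments only through
`(x_{t-v}^{t-1}, s_{t-v-1}^{t-u-1}, y^{t-u-1})` (windows truncated for
small `t`). -/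
def IsMarkov {N u : ℕ} (v : ℕ) (src : Source X S Y N u) : Prop :=
  ∀ (t : Fin N) (x x' : Fin N → X) (s s' : Fin (N + 1) → S) (y y' : Fin N → Y),
    (∀ j : Fin N, (t : ℕ) ≤ (j : ℕ) + v ∧ (j : ℕ) < (t : ℕ) → x j = x' j) →
    (∀ j : Fin (N + 1), (t : ℕ) ≤ (j : ℕ) + v ∧ (j : ℕ) + u ≤ (t : ℕ) → s j = s' j) →
    (∀ j : Fin N, (j : ℕ) + u + 1 ≤ (t : ℕ) → y j = y' j) →
    src.pol t x s y = src.pol t x' s' y'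

/-- `Σ_{t=1}^N I(X^t, S_0^{t-v-1}; Y_t | Y^{t-1})` under the joint law of
the source (state window omitted/truncated when `t - v - 1 < 0`). -/
def objFull {N u : ℕ} (v : ℕ) (ch : NCFSC X S Y) (src : Source X S Y N u) : ℝ :=
  ∑ t : Fin N,
    condMI (jointP ch src)
      (fun ω : Traj X S Y N =>
        ((fun j : {j : Fin N // (j : ℕ) ≤ (t : ℕ)} => ω.1 j.1),
          fun j : {j : Fin (N + 1) // (j : ℕ) + v ≤ (t : ℕ)} => ω.2.1 j.1))
      (fun ω => ω.2.2 t)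
      (fun ω => fun j : {j : Fin N // (j : ℕ) < (t : ℕ)} => ω.2.2 j.1)

/-- `Σ_{t=1}^N I(X_{t-v}^t, S_{t-v-1}; Y_t | Y^{t-1})` under the joint law
of the source (windows truncated for small `t`; the singleton state window
`S_{t-v-1}` is encoded by the condition `j + v = t - 1` in 0-based time and
is empty for `t ≤ v`). -/
def objWin {N u : ℕ} (v : ℕ) (ch : NCFSC X S Y) (src : Source X S Y N u) : ℝ :=
  ∑ t : Fin N,
    condMI (jointP ch src)
      (fun ω : Traj X S Y N =>
        ((fun j : {j : Fin N // (t : ℕ) ≤ (j : ℕ) + v ∧ (j : ℕ) ≤ (t : ℕ)} => ω.1 j.1),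
          fun j : {j : Fin (N + 1) // (j : ℕ) + v = (t : ℕ)} => ω.2.1 j.1))
      (fun ω => ω.2.2 t)
      (fun ω => fun j : {j : Fin N // (j : ℕ) < (t : ℕ)} => ω.2.2 j.1)

/-- Directed information `I(X^N → Y^N) = Σ_{t=1}^N I(X^t; Y_t | Y^{t-1})`. -/
def directedInfo {N u : ℕ} (ch : NCFSC X S Y) (src : Source X S Y N u) : ℝ :=
  ∑ t : Fin N,
    condMI (jointP ch src)
      (fun ω : Traj X S Y N => fun j : {j : Fin N // (j : ℕ) ≤ (t : ℕ)} => ω.1 j.1)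
      (fun ω => ω.2.2 t)
      (fun ω => fun j : {j : Fin N // (j : ℕ) < (t : ℕ)} => ω.2.2 j.1)

/-- The a posteriori vectors `α_{t-1}(y^{t-u-1})` and `α_{t-1}(ỹ^{t-u-1})`
(at the 1-based time `(t:ℕ)+1`) induced by the two output histories `yh`
and `yh'` coincide: for all window values `(x_{t-v}^{t-1}, s_{t-v-1}^{t-u-1})`
the two a posteriori probabilities agree. -/
def alphaWinEq {N u : ℕ} (v : ℕ) (ch : NCFSC X S Y) (src : Source X S Y N u)
    (t : Fin N) (yh yh' : Fin N → Y) : Prop :=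
  ∀ (xf : Fin N → X) (sf : Fin (N + 1) → S),
    condPr (jointP ch src)
        {ω : Traj X S Y N |
          (∀ j : Fin N, (t : ℕ) ≤ (j : ℕ) + v ∧ (j : ℕ) < (t : ℕ) → ω.1 j = xf j) ∧
            ∀ j : Fin (N + 1), (t : ℕ) ≤ (j : ℕ) + v ∧ (j : ℕ) + u ≤ (t : ℕ) → ω.2.1 j = sf j}
        {ω : Traj X S Y N | ∀ j : Fin N, (j : ℕ) + u + 1 ≤ (t : ℕ) → ω.2.2 j = yh j} =
      condPr (jointP ch src)
        {ω : Traj X S Y N |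
          (∀ j : Fin N, (t : ℕ) ≤ (j : ℕ) + v ∧ (j : ℕ) < (t : ℕ) → ω.1 j = xf j) ∧
            ∀ j : Fin (N + 1), (t : ℕ) ≤ (j : ℕ) + v ∧ (j : ℕ) + u ≤ (t : ℕ) → ω.2.1 j = sf j}
        {ω : Traj X S Y N | ∀ j : Fin N, (j : ℕ) + u + 1 ≤ (t : ℕ) → ω.2.2 j = yh' j}

/-- The set `𝒫'_v(u,u)`: the policy at each time gives the same value on
any two positive-probability output histories inducing the same a
posteriori vector. -/
def AlphaPolicy {N u : ℕ} (v : ℕ) (ch : NCFSC X S Y) (src : Source X S Y N u) : Prop :=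
  ∀ (t : Fin N) (yh yh' : Fin N → Y),
    0 < prE (jointP ch src)
        {ω : Traj X S Y N | ∀ j : Fin N, (j : ℕ) + u + 1 ≤ (t : ℕ) → ω.2.2 j = yh j} →
    0 < prE (jointP ch src)
        {ω : Traj X S Y N | ∀ j : Fin N, (j : ℕ) + u + 1 ≤ (t : ℕ) → ω.2.2 j = yh' j} →
    alphaWinEq v ch src t yh yh' →
    ∀ (xf : Fin N → X) (sf : Fin (N + 1) → S) (a : X),
      src.pol t xf sf yh a = src.pol t xf sf yh' a

open scoped Classical

private lemma sum_partition {Ω K : Type} [Fintype Ω] [Fintype K] (f : Ω → ℝ) (G : Ω → Prop)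
    {inst : ∀ ω, Decidable (G ω)} (cls : Ω → K) :
    (∑ ω : Ω, if G ω then f ω else 0)
      = ∑ c : K, ∑ ω : Ω, if G ω ∧ cls ω = c then f ω else 0 := by
  rw [Finset.sum_comm]
  refine Finset.sum_congr rfl fun ω _ => ?_
  by_cases h : G ω
  · simp [h]
  · simp [h]

private lemma sum_ite_congr {Ω : Type} [Fintype Ω] {P Q : Ω → Prop}
    {i1 : ∀ ω, Decidable (P ω)} {i2 : ∀ ω, Decidable (Q ω)} {f g : Ω → ℝ}
    (h : ∀ ω, P ω ↔ Q ω) (hfg : ∀ ω, f ω = g ω) :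
    (∑ ω : Ω, @ite ℝ (P ω) (i1 ω) (f ω) 0) = ∑ ω : Ω, @ite ℝ (Q ω) (i2 ω) (g ω) 0 := by
  refine Finset.sum_congr rfl fun ω _ => ?_
  by_cases hq : Q ω
  · rw [if_pos ((h ω).mpr hq), if_pos hq, hfg ω]
  · rw [if_neg (fun hp => hq ((h ω).mp hp)), if_neg hq]

private lemma prod_ite_succ {n k : ℕ} (hk : k < n) (f : Fin n → ℝ) :
    (∏ i : Fin n, if (i : ℕ) < k + 1 then f i else 1)
      = (∏ i : Fin n, if (i : ℕ) < k then f i else 1) * f ⟨k, hk⟩ := by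
  have h1 : (Finset.univ.filter (fun i : Fin n => (i : ℕ) < k + 1))
      = insert ⟨k, hk⟩ (Finset.univ.filter (fun i : Fin n => (i : ℕ) < k)) := by
    ext i
    simp only [Finset.mem_insert, Finset.mem_filter, Finset.mem_univ, true_and]
    constructor
    · intro h
      rcases Nat.lt_succ_iff_lt_or_eq.mp h with h | h
      · exact Or.inr h
      · exact Or.inl (Fin.ext h)
    · rintro (rfl | h)
      · exact Nat.lt_succ_self k
      · omega
  rw [← Finset.prod_filter, ← Finset.prod_filter, h1,
    Finset.prod_insert (by simp)]
  ring

private lemma prod_ite_bound {n k m : ℕ} (hm : m = k + 1) (hk : k < n) (f : Fin n → ℝ) :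
    (∏ i : Fin n, if (i : ℕ) < m then f i else 1)
      = (∏ i : Fin n, if (i : ℕ) < k then f i else 1) * f ⟨k, hk⟩ := by
  subst hm; exact prod_ite_succ hk f

private lemma W_sum {X S Y : Type} [Fintype S] [Fintype Y]
    (ch : NCFSC X S Y) (x0 : X) (s0 : S) :
    (∑ q : S × Y, ch.W q.2 q.1 x0 s0) = 1 := by
  simp only [Fintype.sum_prod_type]
  have h4 : ∀ r : S, (∑ b : Y, ch.W b r x0 s0) = ch.Q r s0 := by
    intro r
    simp only [NCFSC.W]
    rw [← Finset.sum_mul, ch.P_sum, one_mul]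
  rw [Finset.sum_congr rfl fun r _ => h4 r, ch.Q_sum]

private lemma polW_sum {X S Y : Type} [Fintype X] [Fintype S] [Fintype Y] {N u : ℕ}
    (ch : NCFSC X S Y) (src : Source X S Y N u) (tt : Fin N)
    (ξ : Fin N → X) (σ : Fin (N + 1) → S) (η : Fin N → Y) (s0 : S) :
    (∑ q : X × S × Y, src.pol tt ξ σ η q.1 * ch.W q.2.2 q.2.1 q.1 s0) = 1 := by
  simp only [Fintype.sum_prod_type]
  have h2 : ∀ a : X,
      (∑ r : S, ∑ b : Y, src.pol tt ξ σ η a * ch.W b r a s0) = src.pol tt ξ σ η a := by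
    intro a
    simp only [← Finset.mul_sum]
    have h3 : (∑ r : S, ∑ b : Y, ch.W b r a s0) = 1 := by
      have := W_sum ch a s0
      simpa only [Fintype.sum_prod_type] using this
    rw [h3, mul_one]
  rw [Finset.sum_congr rfl fun a _ => h2 a, src.sum_one]

private lemma polW_sum_upd {X S Y : Type} [Fintype X] [Fintype S] [Fintype Y] {N u : ℕ}
    (ch : NCFSC X S Y) (src : Source X S Y N u) (tt t' kf : Fin N)
    (ξ : Fin N → X) (σ : Fin (N + 1) → S) (η : Fin N → Y) (s0 : S) :
    (∑ q : X × S × Y,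
      src.pol tt ξ σ η q.1 * ch.W q.2.2 q.2.1 (Function.update ξ t' q.1 kf) s0) = 1 := by
  simp only [Fintype.sum_prod_type]
  have h2 : ∀ a : X,
      (∑ r : S, ∑ b : Y, src.pol tt ξ σ η a * ch.W b r (Function.update ξ t' a kf) s0)
        = src.pol tt ξ σ η a := by
    intro a
    simp only [← Finset.mul_sum]
    have h3 : (∑ r : S, ∑ b : Y, ch.W b r (Function.update ξ t' a kf) s0) = 1 := by
      have := W_sum ch (Function.update ξ t' a kf) s0
      simpa only [Fintype.sum_prod_type] using this
    rw [h3, mul_one]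
  rw [Finset.sum_congr rfl fun a _ => h2 a, src.sum_one]

private lemma margM {X S Y : Type} [Fintype X] [Fintype S] [Fintype Y] {N u : ℕ}
    (ch : NCFSC X S Y) (src : Source X S Y N u) (t : Fin N) :
    ∀ d k, N = k + d → (t : ℕ) + 1 ≤ k + u →
      ∀ (ξ : Fin N → X) (σ : Fin (N + 1) → S) (η : Fin N → Y),
      (∑ ω : Traj X S Y N,
        if ((∀ j : Fin N, (j : ℕ) < max k ((t : ℕ) + 1) → ω.1 j = ξ j) ∧
            (∀ j : Fin (N + 1), (j : ℕ) < k + 1 → ω.2.1 j = σ j) ∧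
            (∀ j : Fin N, (j : ℕ) < k → ω.2.2 j = η j)) then jointP ch src ω else 0)
        = ch.init (σ 0) *
          (∏ i : Fin N, if (i : ℕ) < max k ((t : ℕ) + 1) then src.pol i ξ σ η (ξ i) else 1) *
          (∏ i : Fin N, if (i : ℕ) < k then ch.W (η i) (σ i.succ) (ξ i) (σ i.castSucc) else 1) := by
  intro d
  induction d with
  | zero =>
    intro k hNk hku ξ σ η
    have hkN : N = k := by omega
    subst hkN
    have htN : (t : ℕ) < N := t.isLt
    have hmax : max N ((t : ℕ) + 1) = N := max_eq_left (by omega)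
    rw [hmax]
    have hcond : ∀ ω : Traj X S Y N,
        ((∀ j : Fin N, (j : ℕ) < N → ω.1 j = ξ j) ∧
         (∀ j : Fin (N + 1), (j : ℕ) < N + 1 → ω.2.1 j = σ j) ∧
         (∀ j : Fin N, (j : ℕ) < N → ω.2.2 j = η j)) ↔ ω = (ξ, σ, η) := by
      intro ω
      constructor
      · rintro ⟨h1, h2, h3⟩
        obtain ⟨wx, ws, wy⟩ := ω
        simp only [Prod.mk.injEq]
        exact ⟨funext fun j => h1 j j.isLt, funext fun j => h2 j j.isLt,
          funext fun j => h3 j j.isLt⟩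
      · rintro rfl
        exact ⟨fun j _ => rfl, fun j _ => rfl, fun j _ => rfl⟩
    refine Eq.trans (Finset.sum_congr rfl fun ω _ => if_congr (hcond ω) rfl rfl) ?_
    rw [Finset.sum_ite_eq' Finset.univ (ξ, σ, η) (fun ω => jointP ch src ω)]
    simp only [Finset.mem_univ, if_true]
    have hprod : ∀ f : Fin N → ℝ,
        (∏ i : Fin N, if (i : ℕ) < N then f i else 1) = ∏ i : Fin N, f i :=
      fun f => Finset.prod_congr rfl fun i _ => if_pos i.isLt
    rw [show jointP ch src (ξ, σ, η) = ch.init (σ 0) *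
        ∏ i : Fin N, (src.pol i ξ σ η (ξ i) *
          ch.W (η i) (σ i.succ) (ξ i) (σ i.castSucc)) from rfl,
      Finset.prod_mul_distrib, hprod, hprod, ← mul_assoc]
  | succ d ih =>
    intro k hNk hku ξ σ η
    have htN : (t : ℕ) < N := t.isLt
    have hkN : k < N := by omega
    have hk1N : k + 1 < N + 1 := by omega
    rcases le_or_gt ((t : ℕ) + 1) k with hph | hph
    · -- phase 1 : t + 1 ≤ k
      have hmax : max k ((t : ℕ) + 1) = k := max_eq_left hph
      have hmax1 : max (k + 1) ((t : ℕ) + 1) = k + 1 := max_eq_left (by omega)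
      rw [hmax]
      have key : ∀ ω : Traj X S Y N,
          (if ((∀ j : Fin N, (j : ℕ) < k → ω.1 j = ξ j) ∧
               (∀ j : Fin (N + 1), (j : ℕ) < k + 1 → ω.2.1 j = σ j) ∧
               (∀ j : Fin N, (j : ℕ) < k → ω.2.2 j = η j)) then jointP ch src ω else 0)
            = ∑ q : X × S × Y,
              (if ((∀ j : Fin N, (j : ℕ) < max (k + 1) ((t : ℕ) + 1) →
                      ω.1 j = Function.update ξ ⟨k, hkN⟩ q.1 j) ∧
                   (∀ j : Fin (N + 1), (j : ℕ) < (k + 1) + 1 →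
                      ω.2.1 j = Function.update σ ⟨k + 1, hk1N⟩ q.2.1 j) ∧
                   (∀ j : Fin N, (j : ℕ) < k + 1 →
                      ω.2.2 j = Function.update η ⟨k, hkN⟩ q.2.2 j))
                then jointP ch src ω else 0) := by
        intro ω
        by_cases h : ((∀ j : Fin N, (j : ℕ) < k → ω.1 j = ξ j) ∧
               (∀ j : Fin (N + 1), (j : ℕ) < k + 1 → ω.2.1 j = σ j) ∧
               (∀ j : Fin N, (j : ℕ) < k → ω.2.2 j = η j))
        · rw [if_pos h]
          obtain ⟨h1, h2, h3⟩ := h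
          have hcond : ∀ q : X × S × Y,
              ((∀ j : Fin N, (j : ℕ) < max (k + 1) ((t : ℕ) + 1) →
                  ω.1 j = Function.update ξ ⟨k, hkN⟩ q.1 j) ∧
               (∀ j : Fin (N + 1), (j : ℕ) < (k + 1) + 1 →
                  ω.2.1 j = Function.update σ ⟨k + 1, hk1N⟩ q.2.1 j) ∧
               (∀ j : Fin N, (j : ℕ) < k + 1 →
                  ω.2.2 j = Function.update η ⟨k, hkN⟩ q.2.2 j))
              ↔ q = (ω.1 ⟨k, hkN⟩, ω.2.1 ⟨k + 1, hk1N⟩, ω.2.2 ⟨k, hkN⟩) := by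
            intro q
            constructor
            · rintro ⟨g1, g2, g3⟩
              have e1 := g1 ⟨k, hkN⟩ (by rw [hmax1]; exact Nat.lt_succ_self k)
              have e2 := g2 ⟨k + 1, hk1N⟩ (Nat.lt_succ_self (k + 1))
              have e3 := g3 ⟨k, hkN⟩ (Nat.lt_succ_self k)
              rw [Function.update_self] at e1 e2 e3
              obtain ⟨qa, qr, qb⟩ := q
              simp only [Prod.mk.injEq]
              exact ⟨e1.symm, e2.symm, e3.symm⟩
            · rintro rfl
              refine ⟨fun j hj => ?_, fun j hj => ?_, fun j hj => ?_⟩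
              · rw [hmax1] at hj
                rcases Nat.lt_succ_iff_lt_or_eq.mp hj with hlt | heq
                · rw [Function.update_of_ne (Fin.ne_of_val_ne (show (j : ℕ) ≠ k by omega))]
                  exact h1 j hlt
                · have hje : j = ⟨k, hkN⟩ := Fin.ext heq
                  rw [hje, Function.update_self]
              · rcases Nat.lt_succ_iff_lt_or_eq.mp hj with hlt | heq
                · rw [Function.update_of_ne (Fin.ne_of_val_ne (show (j : ℕ) ≠ k + 1 by omega))]
                  exact h2 j hlt
                · have hje : j = ⟨k + 1, hk1N⟩ := Fin.ext heq
                  rw [hje, Function.update_self]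
              · rcases Nat.lt_succ_iff_lt_or_eq.mp hj with hlt | heq
                · rw [Function.update_of_ne (Fin.ne_of_val_ne (show (j : ℕ) ≠ k by omega))]
                  exact h3 j hlt
                · have hje : j = ⟨k, hkN⟩ := Fin.ext heq
                  rw [hje, Function.update_self]
          refine Eq.trans ?_ (Finset.sum_congr rfl fun q _ => (if_congr (hcond q) rfl rfl).symm)
          rw [Finset.sum_ite_eq' Finset.univ
            (ω.1 ⟨k, hkN⟩, ω.2.1 ⟨k + 1, hk1N⟩, ω.2.2 ⟨k, hkN⟩) (fun _ => jointP ch src ω)]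
          simp only [Finset.mem_univ, if_true]
        · rw [if_neg h]
          symm
          apply Finset.sum_eq_zero
          intro q _
          rw [if_neg]
          rintro ⟨g1, g2, g3⟩
          refine h ⟨fun j hj => ?_, fun j hj => ?_, fun j hj => ?_⟩
          · exact (g1 j (by rw [hmax1]; omega)).trans
              (Function.update_of_ne (Fin.ne_of_val_ne (show (j : ℕ) ≠ k by omega)) _ _)
          · exact (g2 j (by omega)).trans
              (Function.update_of_ne (Fin.ne_of_val_ne (show (j : ℕ) ≠ k + 1 by omega)) _ _)
          · exact (g3 j (by omega)).trans
              (Function.update_of_ne (Fin.ne_of_val_ne (show (j : ℕ) ≠ k by omega)) _ _)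
      refine Eq.trans (Finset.sum_congr rfl fun ω _ => key ω) ?_
      rw [Finset.sum_comm]
      refine Eq.trans (Finset.sum_congr rfl fun q _ =>
        ih (k + 1) (by omega) (by omega) (Function.update ξ ⟨k, hkN⟩ q.1)
          (Function.update σ ⟨k + 1, hk1N⟩ q.2.1) (Function.update η ⟨k, hkN⟩ q.2.2)) ?_
      have hterm : ∀ q : X × S × Y,
          ch.init (Function.update σ ⟨k + 1, hk1N⟩ q.2.1 0) *
            (∏ i : Fin N, if (i : ℕ) < max (k + 1) ((t : ℕ) + 1) then
                src.pol i (Function.update ξ ⟨k, hkN⟩ q.1)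
                  (Function.update σ ⟨k + 1, hk1N⟩ q.2.1)
                  (Function.update η ⟨k, hkN⟩ q.2.2)
                  (Function.update ξ ⟨k, hkN⟩ q.1 i) else 1) *
            (∏ i : Fin N, if (i : ℕ) < k + 1 then
                ch.W (Function.update η ⟨k, hkN⟩ q.2.2 i)
                  (Function.update σ ⟨k + 1, hk1N⟩ q.2.1 i.succ)
                  (Function.update ξ ⟨k, hkN⟩ q.1 i)
                  (Function.update σ ⟨k + 1, hk1N⟩ q.2.1 i.castSucc) else 1)
          = (ch.init (σ 0) *
              (∏ i : Fin N, if (i : ℕ) < k then src.pol i ξ σ η (ξ i) else 1) *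
              (∏ i : Fin N, if (i : ℕ) < k then
                ch.W (η i) (σ i.succ) (ξ i) (σ i.castSucc) else 1)) *
            (src.pol ⟨k, hkN⟩ ξ σ η q.1 *
              ch.W q.2.2 q.2.1 q.1 (σ (⟨k, hkN⟩ : Fin N).castSucc)) := by
        intro q
        obtain ⟨a, r, b⟩ := q
        set ξ' := Function.update ξ ⟨k, hkN⟩ a with hxi
        set σ' := Function.update σ ⟨k + 1, hk1N⟩ r with hsi
        set η' := Function.update η ⟨k, hkN⟩ b with hyi
        have hinit : σ' 0 = σ 0 :=
          Function.update_of_ne (Fin.ne_of_val_ne (show (0 : ℕ) ≠ k + 1 by omega)) _ _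
        have hP1 : (∏ i : Fin N, if (i : ℕ) < k then src.pol i ξ' σ' η' (ξ' i) else 1)
            = ∏ i : Fin N, if (i : ℕ) < k then src.pol i ξ σ η (ξ i) else 1 := by
          refine Finset.prod_congr rfl fun i _ => ?_
          by_cases hi : (i : ℕ) < k
          · rw [if_pos hi, if_pos hi]
            have h5 : ξ' i = ξ i :=
              Function.update_of_ne (Fin.ne_of_val_ne (show (i : ℕ) ≠ k by omega)) _ _
            have h6 : src.pol i ξ' σ' η' = src.pol i ξ σ η :=
              src.causal i ξ' ξ σ' σ η' η
                (fun j hj => Function.update_of_ne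
                  (Fin.ne_of_val_ne (show (j : ℕ) ≠ k by omega)) _ _)
                (fun j hj => Function.update_of_ne
                  (Fin.ne_of_val_ne (show (j : ℕ) ≠ k + 1 by omega)) _ _)
                (fun j hj => Function.update_of_ne
                  (Fin.ne_of_val_ne (show (j : ℕ) ≠ k by omega)) _ _)
            rw [h5, h6]
          · rw [if_neg hi, if_neg hi]
        have hP2 : (∏ i : Fin N, if (i : ℕ) < k then
              ch.W (η' i) (σ' i.succ) (ξ' i) (σ' i.castSucc) else 1)
            = ∏ i : Fin N, if (i : ℕ) < k then
              ch.W (η i) (σ i.succ) (ξ i) (σ i.castSucc) else 1 := by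
          refine Finset.prod_congr rfl fun i _ => ?_
          by_cases hi : (i : ℕ) < k
          · rw [if_pos hi, if_pos hi]
            have hw1 : η' i = η i :=
              Function.update_of_ne (Fin.ne_of_val_ne (show (i : ℕ) ≠ k by omega)) _ _
            have hw2 : σ' i.succ = σ i.succ :=
              Function.update_of_ne (Fin.ne_of_val_ne (show (i : ℕ) + 1 ≠ k + 1 by omega)) _ _
            have hw3 : ξ' i = ξ i :=
              Function.update_of_ne (Fin.ne_of_val_ne (show (i : ℕ) ≠ k by omega)) _ _
            have hw4 : σ' i.castSucc = σ i.castSucc :=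
              Function.update_of_ne (Fin.ne_of_val_ne (show (i : ℕ) ≠ k + 1 by omega)) _ _
            rw [hw1, hw2, hw3, hw4]
          · rw [if_neg hi, if_neg hi]
        have hpolk : src.pol ⟨k, hkN⟩ ξ' σ' η' = src.pol ⟨k, hkN⟩ ξ σ η :=
          src.causal ⟨k, hkN⟩ ξ' ξ σ' σ η' η
            (fun j hj => by
              have hj2 : (j : ℕ) < k := hj
              exact Function.update_of_ne
                (Fin.ne_of_val_ne (show (j : ℕ) ≠ k by omega)) _ _)
            (fun j hj => by
              have hj2 : (j : ℕ) + u ≤ k := hj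
              exact Function.update_of_ne
                (Fin.ne_of_val_ne (show (j : ℕ) ≠ k + 1 by omega)) _ _)
            (fun j hj => by
              have hj2 : (j : ℕ) + u + 1 ≤ k := hj
              exact Function.update_of_ne
                (Fin.ne_of_val_ne (show (j : ℕ) ≠ k by omega)) _ _)
        have hsucc : (⟨k, hkN⟩ : Fin N).succ = (⟨k + 1, hk1N⟩ : Fin (N + 1)) := rfl
        have hpa : ξ' ⟨k, hkN⟩ = a := Function.update_self _ _ _
        have hra : σ' ⟨k + 1, hk1N⟩ = r := Function.update_self _ _ _
        have hba : η' ⟨k, hkN⟩ = b := Function.update_self _ _ _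
        have hcast : σ' (⟨k, hkN⟩ : Fin N).castSucc = σ (⟨k, hkN⟩ : Fin N).castSucc :=
          Function.update_of_ne (Fin.ne_of_val_ne (show (k : ℕ) ≠ k + 1 by omega)) _ _
        rw [hmax1, prod_ite_succ hkN, prod_ite_succ hkN, hinit, hP1, hP2, hpolk, hsucc,
          hpa, hra, hba, hcast]
        ring
      refine Eq.trans (Finset.sum_congr rfl fun q _ => hterm q) ?_
      rw [← Finset.mul_sum]
      rw [polW_sum ch src ⟨k, hkN⟩ ξ σ η (σ (⟨k, hkN⟩ : Fin N).castSucc), mul_one]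
    · -- phase 2 : k ≤ t
      have hmax : max k ((t : ℕ) + 1) = (t : ℕ) + 1 := max_eq_right (by omega)
      have hmax1 : max (k + 1) ((t : ℕ) + 1) = (t : ℕ) + 1 := max_eq_right (by omega)
      rw [hmax]
      have key : ∀ ω : Traj X S Y N,
          (if ((∀ j : Fin N, (j : ℕ) < (t : ℕ) + 1 → ω.1 j = ξ j) ∧
               (∀ j : Fin (N + 1), (j : ℕ) < k + 1 → ω.2.1 j = σ j) ∧
               (∀ j : Fin N, (j : ℕ) < k → ω.2.2 j = η j)) then jointP ch src ω else 0)
            = ∑ q : S × Y,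
              (if ((∀ j : Fin N, (j : ℕ) < max (k + 1) ((t : ℕ) + 1) → ω.1 j = ξ j) ∧
                   (∀ j : Fin (N + 1), (j : ℕ) < (k + 1) + 1 →
                      ω.2.1 j = Function.update σ ⟨k + 1, hk1N⟩ q.1 j) ∧
                   (∀ j : Fin N, (j : ℕ) < k + 1 →
                      ω.2.2 j = Function.update η ⟨k, hkN⟩ q.2 j))
                then jointP ch src ω else 0) := by
        intro ω
        by_cases h : ((∀ j : Fin N, (j : ℕ) < (t : ℕ) + 1 → ω.1 j = ξ j) ∧
               (∀ j : Fin (N + 1), (j : ℕ) < k + 1 → ω.2.1 j = σ j) ∧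
               (∀ j : Fin N, (j : ℕ) < k → ω.2.2 j = η j))
        · rw [if_pos h]
          obtain ⟨h1, h2, h3⟩ := h
          have hcond : ∀ q : S × Y,
              ((∀ j : Fin N, (j : ℕ) < max (k + 1) ((t : ℕ) + 1) → ω.1 j = ξ j) ∧
               (∀ j : Fin (N + 1), (j : ℕ) < (k + 1) + 1 →
                  ω.2.1 j = Function.update σ ⟨k + 1, hk1N⟩ q.1 j) ∧
               (∀ j : Fin N, (j : ℕ) < k + 1 →
                  ω.2.2 j = Function.update η ⟨k, hkN⟩ q.2 j))
              ↔ q = (ω.2.1 ⟨k + 1, hk1N⟩, ω.2.2 ⟨k, hkN⟩) := by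
            intro q
            constructor
            · rintro ⟨g1, g2, g3⟩
              have e2 := g2 ⟨k + 1, hk1N⟩ (Nat.lt_succ_self (k + 1))
              have e3 := g3 ⟨k, hkN⟩ (Nat.lt_succ_self k)
              rw [Function.update_self] at e2 e3
              obtain ⟨qr, qb⟩ := q
              simp only [Prod.mk.injEq]
              exact ⟨e2.symm, e3.symm⟩
            · rintro rfl
              refine ⟨fun j hj => ?_, fun j hj => ?_, fun j hj => ?_⟩
              · rw [hmax1] at hj
                exact h1 j hj
              · rcases Nat.lt_succ_iff_lt_or_eq.mp hj with hlt | heq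
                · rw [Function.update_of_ne (Fin.ne_of_val_ne (show (j : ℕ) ≠ k + 1 by omega))]
                  exact h2 j hlt
                · have hje : j = ⟨k + 1, hk1N⟩ := Fin.ext heq
                  rw [hje, Function.update_self]
              · rcases Nat.lt_succ_iff_lt_or_eq.mp hj with hlt | heq
                · rw [Function.update_of_ne (Fin.ne_of_val_ne (show (j : ℕ) ≠ k by omega))]
                  exact h3 j hlt
                · have hje : j = ⟨k, hkN⟩ := Fin.ext heq
                  rw [hje, Function.update_self]
          refine Eq.trans ?_ (Finset.sum_congr rfl fun q _ => (if_congr (hcond q) rfl rfl).symm)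
          rw [Finset.sum_ite_eq' Finset.univ
            (ω.2.1 ⟨k + 1, hk1N⟩, ω.2.2 ⟨k, hkN⟩) (fun _ => jointP ch src ω)]
          simp only [Finset.mem_univ, if_true]
        · rw [if_neg h]
          symm
          apply Finset.sum_eq_zero
          intro q _
          rw [if_neg]
          rintro ⟨g1, g2, g3⟩
          refine h ⟨fun j hj => ?_, fun j hj => ?_, fun j hj => ?_⟩
          · exact g1 j (by rw [hmax1]; omega)
          · exact (g2 j (by omega)).trans
              (Function.update_of_ne (Fin.ne_of_val_ne (show (j : ℕ) ≠ k + 1 by omega)) _ _)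
          · exact (g3 j (by omega)).trans
              (Function.update_of_ne (Fin.ne_of_val_ne (show (j : ℕ) ≠ k by omega)) _ _)
      refine Eq.trans (Finset.sum_congr rfl fun ω _ => key ω) ?_
      rw [Finset.sum_comm]
      refine Eq.trans (Finset.sum_congr rfl fun q _ =>
        ih (k + 1) (by omega) (by omega) ξ
          (Function.update σ ⟨k + 1, hk1N⟩ q.1) (Function.update η ⟨k, hkN⟩ q.2)) ?_
      have hterm : ∀ q : S × Y,
          ch.init (Function.update σ ⟨k + 1, hk1N⟩ q.1 0) *
            (∏ i : Fin N, if (i : ℕ) < max (k + 1) ((t : ℕ) + 1) then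
                src.pol i ξ (Function.update σ ⟨k + 1, hk1N⟩ q.1)
                  (Function.update η ⟨k, hkN⟩ q.2) (ξ i) else 1) *
            (∏ i : Fin N, if (i : ℕ) < k + 1 then
                ch.W (Function.update η ⟨k, hkN⟩ q.2 i)
                  (Function.update σ ⟨k + 1, hk1N⟩ q.1 i.succ)
                  (ξ i)
                  (Function.update σ ⟨k + 1, hk1N⟩ q.1 i.castSucc) else 1)
          = (ch.init (σ 0) *
              (∏ i : Fin N, if (i : ℕ) < (t : ℕ) + 1 then src.pol i ξ σ η (ξ i) else 1) *
              (∏ i : Fin N, if (i : ℕ) < k then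
                ch.W (η i) (σ i.succ) (ξ i) (σ i.castSucc) else 1)) *
            ch.W q.2 q.1 (ξ ⟨k, hkN⟩) (σ (⟨k, hkN⟩ : Fin N).castSucc) := by
        intro q
        obtain ⟨r, b⟩ := q
        set σ' := Function.update σ ⟨k + 1, hk1N⟩ r with hsi
        set η' := Function.update η ⟨k, hkN⟩ b with hyi
        have hinit : σ' 0 = σ 0 :=
          Function.update_of_ne (Fin.ne_of_val_ne (show (0 : ℕ) ≠ k + 1 by omega)) _ _
        have hP1 : (∏ i : Fin N, if (i : ℕ) < (t : ℕ) + 1 then src.pol i ξ σ' η' (ξ i) else 1)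
            = ∏ i : Fin N, if (i : ℕ) < (t : ℕ) + 1 then src.pol i ξ σ η (ξ i) else 1 := by
          refine Finset.prod_congr rfl fun i _ => ?_
          by_cases hi : (i : ℕ) < (t : ℕ) + 1
          · rw [if_pos hi, if_pos hi]
            have h6 : src.pol i ξ σ' η' = src.pol i ξ σ η :=
              src.causal i ξ ξ σ' σ η' η (fun j _ => rfl)
                (fun j hj => Function.update_of_ne
                  (Fin.ne_of_val_ne (show (j : ℕ) ≠ k + 1 by omega)) _ _)
                (fun j hj => Function.update_of_ne
                  (Fin.ne_of_val_ne (show (j : ℕ) ≠ k by omega)) _ _)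
            rw [h6]
          · rw [if_neg hi, if_neg hi]
        have hP2 : (∏ i : Fin N, if (i : ℕ) < k then
              ch.W (η' i) (σ' i.succ) (ξ i) (σ' i.castSucc) else 1)
            = ∏ i : Fin N, if (i : ℕ) < k then
              ch.W (η i) (σ i.succ) (ξ i) (σ i.castSucc) else 1 := by
          refine Finset.prod_congr rfl fun i _ => ?_
          by_cases hi : (i : ℕ) < k
          · rw [if_pos hi, if_pos hi]
            have hw1 : η' i = η i :=
              Function.update_of_ne (Fin.ne_of_val_ne (show (i : ℕ) ≠ k by omega)) _ _
            have hw2 : σ' i.succ = σ i.succ :=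
              Function.update_of_ne (Fin.ne_of_val_ne (show (i : ℕ) + 1 ≠ k + 1 by omega)) _ _
            have hw4 : σ' i.castSucc = σ i.castSucc :=
              Function.update_of_ne (Fin.ne_of_val_ne (show (i : ℕ) ≠ k + 1 by omega)) _ _
            rw [hw1, hw2, hw4]
          · rw [if_neg hi, if_neg hi]
        have hsucc : (⟨k, hkN⟩ : Fin N).succ = (⟨k + 1, hk1N⟩ : Fin (N + 1)) := rfl
        have hra : σ' ⟨k + 1, hk1N⟩ = r := Function.update_self _ _ _
        have hba : η' ⟨k, hkN⟩ = b := Function.update_self _ _ _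
        have hcast : σ' (⟨k, hkN⟩ : Fin N).castSucc = σ (⟨k, hkN⟩ : Fin N).castSucc :=
          Function.update_of_ne (Fin.ne_of_val_ne (show (k : ℕ) ≠ k + 1 by omega)) _ _
        rw [hmax1, prod_ite_succ hkN, hinit, hP1, hP2, hsucc, hra, hba, hcast]
        ring
      refine Eq.trans (Finset.sum_congr rfl fun q _ => hterm q) ?_
      rw [← Finset.mul_sum]
      rw [W_sum ch (ξ ⟨k, hkN⟩) (σ (⟨k, hkN⟩ : Fin N).castSucc), mul_one]

private def SPX {X : Type} {N : ℕ} (t : Fin N) (xf ξ : Fin N → X) : Prop :=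
  ∀ j : Fin N, ¬((j : ℕ) < (t : ℕ) + 1 ∧ (j : ℕ) ≠ (t : ℕ)) → ξ j = xf j

private def SPS {S : Type} {N : ℕ} (u tn : ℕ) (sf σ : Fin (N + 1) → S) : Prop :=
  ∀ j : Fin (N + 1), ¬((j : ℕ) < tn + 1 - u + 1 ∧ (j : ℕ) ≠ tn + 1 - u) → σ j = sf j

private def MX {X : Type} {N : ℕ} (v : ℕ) (t : Fin N) (xg ξ : Fin N → X) : Prop :=
  ∀ j : Fin N, ((t : ℕ) ≤ (j : ℕ) + v ∧ (j : ℕ) < (t : ℕ)) → ξ j = xg j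

private def MS {S : Type} {N : ℕ} (u v tn : ℕ) (sg σ : Fin (N + 1) → S) : Prop :=
  ∀ j : Fin (N + 1), (tn ≤ (j : ℕ) + v ∧ (j : ℕ) + u ≤ tn) → σ j = sg j

private def Gp {X S Y : Type} [Fintype X] [Fintype S] [Fintype Y] {N u : ℕ}
    (ch : NCFSC X S Y) (src : Source X S Y N u) (t : Fin N) (yh : Fin N → Y)
    (ξ : Fin N → X) (σ : Fin (N + 1) → S) : ℝ :=
  ch.init (σ 0) *
    (∏ i : Fin N, if (i : ℕ) < (t : ℕ) then src.pol i ξ σ yh (ξ i) else 1) *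
    (∏ i : Fin N, if (i : ℕ) < (t : ℕ) - u then
      ch.W (yh i) (σ i.succ) (ξ i) (σ i.castSucc) else 1)

private lemma margT {X S Y : Type} [Fintype X] [Fintype S] [Fintype Y] {N u : ℕ}
    (ch : NCFSC X S Y) (src : Source X S Y N u) (t : Fin N) (htu : u ≤ (t : ℕ))
    (ξ : Fin N → X) (σ : Fin (N + 1) → S) (η : Fin N → Y) :
    (∑ ω : Traj X S Y N,
      if ((∀ j : Fin N, (j : ℕ) < (t : ℕ) + 1 → ω.1 j = ξ j) ∧
          (∀ j : Fin (N + 1), (j : ℕ) < (t : ℕ) + 1 - u + 1 → ω.2.1 j = σ j) ∧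
          (∀ j : Fin N, (j : ℕ) < (t : ℕ) + 1 - u → ω.2.2 j = η j))
        then jointP ch src ω else 0)
      = ch.init (σ 0) *
        (∏ i : Fin N, if (i : ℕ) < (t : ℕ) + 1 then src.pol i ξ σ η (ξ i) else 1) *
        (∏ i : Fin N, if (i : ℕ) < (t : ℕ) + 1 - u then
          ch.W (η i) (σ i.succ) (ξ i) (σ i.castSucc) else 1) := by
  have htN : (t : ℕ) < N := t.isLt
  have h := margM ch src t (N - ((t : ℕ) + 1 - u)) ((t : ℕ) + 1 - u) (by omega) (by omega) ξ σ η
  rwa [show max ((t : ℕ) + 1 - u) ((t : ℕ) + 1) = (t : ℕ) + 1 from max_eq_right (by omega)] at h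

private lemma Gdec {X S Y : Type} [Fintype X] [Fintype S] [Fintype Y] {N u : ℕ}
    (ch : NCFSC X S Y) (src : Source X S Y N u) (t : Fin N) (htu : u ≤ (t : ℕ))
    (yh : Fin N → Y) (ξ : Fin N → X) (σ : Fin (N + 1) → S) (a : X) (r : S) (b : Y) :
    ch.init (Function.update σ ⟨(t : ℕ) + 1 - u, by have := t.isLt; omega⟩ r 0) *
      (∏ i : Fin N, if (i : ℕ) < (t : ℕ) + 1 then
        src.pol i (Function.update ξ t a)
          (Function.update σ ⟨(t : ℕ) + 1 - u, by have := t.isLt; omega⟩ r)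
          (Function.update yh ⟨(t : ℕ) - u, by have := t.isLt; omega⟩ b)
          (Function.update ξ t a i) else 1) *
      (∏ i : Fin N, if (i : ℕ) < (t : ℕ) + 1 - u then
        ch.W (Function.update yh ⟨(t : ℕ) - u, by have := t.isLt; omega⟩ b i)
          (Function.update σ ⟨(t : ℕ) + 1 - u, by have := t.isLt; omega⟩ r i.succ)
          (Function.update ξ t a i)
          (Function.update σ ⟨(t : ℕ) + 1 - u, by have := t.isLt; omega⟩ r i.castSucc) else 1)
    = Gp ch src t yh ξ σ * src.pol t ξ σ yh a *
      ch.W b r (Function.update ξ t a ⟨(t : ℕ) - u, by have := t.isLt; omega⟩)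
        (σ ⟨(t : ℕ) - u, by have := t.isLt; omega⟩) := by
  have htN : (t : ℕ) < N := t.isLt
  have hkfN : (t : ℕ) - u < N := by omega
  have hk0N : (t : ℕ) - u < N + 1 := by omega
  have hk1N : (t : ℕ) + 1 - u < N + 1 := by omega
  set ξ' := Function.update ξ t a with hxi
  set σ' := Function.update σ ⟨(t : ℕ) + 1 - u, by have := t.isLt; omega⟩ r with hsi
  set η' := Function.update yh ⟨(t : ℕ) - u, by have := t.isLt; omega⟩ b with hyi
  have hsp : (t : ℕ) + 1 - u = ((t : ℕ) - u) + 1 := by omega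
  rw [prod_ite_succ t.isLt, prod_ite_bound hsp hkfN, Fin.eta t t.isLt]
  have hinit : σ' 0 = σ 0 :=
    Function.update_of_ne (Fin.ne_of_val_ne (show (0 : ℕ) ≠ (t : ℕ) + 1 - u by omega)) _ _
  have hP1 : (∏ i : Fin N, if (i : ℕ) < (t : ℕ) then src.pol i ξ' σ' η' (ξ' i) else 1)
      = ∏ i : Fin N, if (i : ℕ) < (t : ℕ) then src.pol i ξ σ yh (ξ i) else 1 := by
    refine Finset.prod_congr rfl fun i _ => ?_
    by_cases hi : (i : ℕ) < (t : ℕ)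
    · rw [if_pos hi, if_pos hi]
      have hv1 : ξ' i = ξ i :=
        Function.update_of_ne (Fin.ne_of_val_ne (show (i : ℕ) ≠ (t : ℕ) by omega)) _ _
      have h6 : src.pol i ξ' σ' η' = src.pol i ξ σ yh :=
        src.causal i ξ' ξ σ' σ η' yh
          (fun j hj => Function.update_of_ne
            (Fin.ne_of_val_ne (show (j : ℕ) ≠ (t : ℕ) by omega)) _ _)
          (fun j hj => Function.update_of_ne
            (Fin.ne_of_val_ne (show (j : ℕ) ≠ (t : ℕ) + 1 - u by omega)) _ _)
          (fun j hj => Function.update_of_ne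
            (Fin.ne_of_val_ne (show (j : ℕ) ≠ (t : ℕ) - u by omega)) _ _)
      rw [hv1, h6]
    · rw [if_neg hi, if_neg hi]
  have hP2 : (∏ i : Fin N, if (i : ℕ) < (t : ℕ) - u then
        ch.W (η' i) (σ' i.succ) (ξ' i) (σ' i.castSucc) else 1)
      = ∏ i : Fin N, if (i : ℕ) < (t : ℕ) - u then
        ch.W (yh i) (σ i.succ) (ξ i) (σ i.castSucc) else 1 := by
    refine Finset.prod_congr rfl fun i _ => ?_
    by_cases hi : (i : ℕ) < (t : ℕ) - u
    · rw [if_pos hi, if_pos hi]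
      have hw1 : η' i = yh i :=
        Function.update_of_ne (Fin.ne_of_val_ne (show (i : ℕ) ≠ (t : ℕ) - u by omega)) _ _
      have hw2 : σ' i.succ = σ i.succ :=
        Function.update_of_ne
          (Fin.ne_of_val_ne (show (i : ℕ) + 1 ≠ (t : ℕ) + 1 - u by omega)) _ _
      have hw3 : ξ' i = ξ i :=
        Function.update_of_ne (Fin.ne_of_val_ne (show (i : ℕ) ≠ (t : ℕ) by omega)) _ _
      have hw4 : σ' i.castSucc = σ i.castSucc :=
        Function.update_of_ne (Fin.ne_of_val_ne (show (i : ℕ) ≠ (t : ℕ) + 1 - u by omega)) _ _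
      rw [hw1, hw2, hw3, hw4]
    · rw [if_neg hi, if_neg hi]
  have hpolt : src.pol t ξ' σ' η' = src.pol t ξ σ yh :=
    src.causal t ξ' ξ σ' σ η' yh
      (fun j hj => Function.update_of_ne
        (Fin.ne_of_val_ne (show (j : ℕ) ≠ (t : ℕ) by omega)) _ _)
      (fun j hj => Function.update_of_ne
        (Fin.ne_of_val_ne (show (j : ℕ) ≠ (t : ℕ) + 1 - u by omega)) _ _)
      (fun j hj => Function.update_of_ne
        (Fin.ne_of_val_ne (show (j : ℕ) ≠ (t : ℕ) - u by omega)) _ _)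
  have hpa : ξ' t = a := Function.update_self _ _ _
  have hba : η' ⟨(t : ℕ) - u, hkfN⟩ = b := Function.update_self _ _ _
  have hsucc : (⟨(t : ℕ) - u, hkfN⟩ : Fin N).succ
      = (⟨(t : ℕ) + 1 - u, hk1N⟩ : Fin (N + 1)) :=
    Fin.ext (show (t : ℕ) - u + 1 = (t : ℕ) + 1 - u by omega)
  have hra : σ' ⟨(t : ℕ) + 1 - u, hk1N⟩ = r := Function.update_self _ _ _
  have hcast : (⟨(t : ℕ) - u, hkfN⟩ : Fin N).castSucc
      = (⟨(t : ℕ) - u, hk0N⟩ : Fin (N + 1)) := rfl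
  have hs0 : σ' ⟨(t : ℕ) - u, hk0N⟩ = σ ⟨(t : ℕ) - u, hk0N⟩ :=
    Function.update_of_ne
      (Fin.ne_of_val_ne (show (t : ℕ) - u ≠ (t : ℕ) + 1 - u by omega)) _ _
  rw [hinit, hP1, hP2, hpolt, hpa, hba, hsucc, hra, hcast, hs0]
  simp only [Gp]
  ring

private lemma L_EF {X S Y : Type} [Fintype X] [Fintype S] [Fintype Y] {N u : ℕ}
    (ch : NCFSC X S Y) (src : Source X S Y N u) (t : Fin N) (htu : u ≤ (t : ℕ))
    (yh : Fin N → Y) (xf : Fin N → X) (sf : Fin (N + 1) → S) (y : Y) :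
    prE (jointP ch src)
        ({ω : Traj X S Y N | ω.2.2 ⟨(t : ℕ) - u, by have := t.isLt; omega⟩ = y} ∩
          {ω : Traj X S Y N | ∀ j : Fin N, (j : ℕ) + u + 1 ≤ (t : ℕ) → ω.2.2 j = yh j})
      = ∑ c : ((Fin N → X) × (Fin (N + 1) → S)) × (X × S × Y),
          if SPX t xf c.1.1 ∧ SPS u (t : ℕ) sf c.1.2 ∧ c.2.2.2 = y then
            Gp ch src t yh c.1.1 c.1.2 * src.pol t c.1.1 c.1.2 yh c.2.1 *
              ch.W c.2.2.2 c.2.2.1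
                (Function.update c.1.1 t c.2.1 ⟨(t : ℕ) - u, by have := t.isLt; omega⟩)
                (c.1.2 ⟨(t : ℕ) - u, by have := t.isLt; omega⟩)
          else 0 := by
  have htN : (t : ℕ) < N := t.isLt
  have hkfN : (t : ℕ) - u < N := by omega
  have hk0N : (t : ℕ) - u < N + 1 := by omega
  have hk1N : (t : ℕ) + 1 - u < N + 1 := by omega
  have step1 : prE (jointP ch src)
      ({ω : Traj X S Y N | ω.2.2 ⟨(t : ℕ) - u, by have := t.isLt; omega⟩ = y} ∩
        {ω : Traj X S Y N | ∀ j : Fin N, (j : ℕ) + u + 1 ≤ (t : ℕ) → ω.2.2 j = yh j})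
      = ∑ ω : Traj X S Y N,
        if (∀ j : Fin N, (j : ℕ) < (t : ℕ) + 1 - u →
            ω.2.2 j = Function.update yh ⟨(t : ℕ) - u, hkfN⟩ y j)
          then jointP ch src ω else 0 := by
    unfold prE
    refine Finset.sum_congr rfl fun ω _ => ?_
    rw [Set.indicator_apply]
    refine if_congr ?_ rfl rfl
    simp only [Set.mem_inter_iff, Set.mem_setOf_eq]
    constructor
    · rintro ⟨hy1, hy2⟩ j hj
      by_cases hj2 : (j : ℕ) = (t : ℕ) - u
      · have hje : j = ⟨(t : ℕ) - u, hkfN⟩ := Fin.ext hj2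
        rw [hje, Function.update_self]
        exact hy1
      · rw [Function.update_of_ne (Fin.ne_of_val_ne hj2)]
        exact hy2 j (by omega)
    · intro h
      constructor
      · have h2 := h ⟨(t : ℕ) - u, hkfN⟩ (show (t : ℕ) - u < (t : ℕ) + 1 - u by omega)
        rwa [Function.update_self] at h2
      · intro j hj
        have h2 := h j (by omega)
        rwa [Function.update_of_ne
          (Fin.ne_of_val_ne (show (j : ℕ) ≠ (t : ℕ) - u by omega))] at h2
  rw [step1]
  refine Eq.trans (sum_partition (jointP ch src)
    (fun ω : Traj X S Y N => ∀ j : Fin N, (j : ℕ) < (t : ℕ) + 1 - u →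
        ω.2.2 j = Function.update yh ⟨(t : ℕ) - u, hkfN⟩ y j)
    (fun ω : Traj X S Y N =>
      ((fun j : Fin N => if (j : ℕ) < (t : ℕ) + 1 ∧ (j : ℕ) ≠ (t : ℕ) then ω.1 j else xf j,
        fun j : Fin (N + 1) =>
          if (j : ℕ) < (t : ℕ) + 1 - u + 1 ∧ (j : ℕ) ≠ (t : ℕ) + 1 - u then ω.2.1 j else sf j),
       (ω.1 t, ω.2.1 ⟨(t : ℕ) + 1 - u, hk1N⟩, ω.2.2 ⟨(t : ℕ) - u, hkfN⟩)))) ?_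
  refine Finset.sum_congr rfl fun c _ => ?_
  obtain ⟨⟨ξ, σ⟩, a, r, b⟩ := c
  dsimp only
  by_cases hc : SPX t xf ξ ∧ SPS u (t : ℕ) sf σ ∧ b = y
  · rw [if_pos hc]
    obtain ⟨hsx, hss, rfl⟩ := hc
    have hiff : ∀ ω : Traj X S Y N,
        ((∀ j : Fin N, (j : ℕ) < (t : ℕ) + 1 - u →
            ω.2.2 j = Function.update yh ⟨(t : ℕ) - u, hkfN⟩ b j) ∧
          ((fun j : Fin N => if (j : ℕ) < (t : ℕ) + 1 ∧ (j : ℕ) ≠ (t : ℕ) then ω.1 j else xf j,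
            fun j : Fin (N + 1) =>
              if (j : ℕ) < (t : ℕ) + 1 - u + 1 ∧ (j : ℕ) ≠ (t : ℕ) + 1 - u then ω.2.1 j
              else sf j),
           (ω.1 t, ω.2.1 ⟨(t : ℕ) + 1 - u, hk1N⟩, ω.2.2 ⟨(t : ℕ) - u, hkfN⟩))
            = ((ξ, σ), (a, r, b)))
        ↔ ((∀ j : Fin N, (j : ℕ) < (t : ℕ) + 1 → ω.1 j = Function.update ξ t a j) ∧
           (∀ j : Fin (N + 1), (j : ℕ) < (t : ℕ) + 1 - u + 1 →
              ω.2.1 j = Function.update σ ⟨(t : ℕ) + 1 - u, hk1N⟩ r j) ∧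
           (∀ j : Fin N, (j : ℕ) < (t : ℕ) + 1 - u →
              ω.2.2 j = Function.update yh ⟨(t : ℕ) - u, hkfN⟩ b j)) := by
      intro ω
      constructor
      · rintro ⟨hY, hcls⟩
        simp only [Prod.mk.injEq] at hcls
        obtain ⟨⟨hm1, hm2⟩, hq1, hq2, hq3⟩ := hcls
        refine ⟨fun j hj => ?_, fun j hj => ?_, hY⟩
        · by_cases hjt : (j : ℕ) = (t : ℕ)
          · have hje : j = t := Fin.ext hjt
            rw [hje, Function.update_self]
            exact hq1
          · rw [Function.update_of_ne (Fin.ne_of_val_ne hjt)]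
            have h3 := congrFun hm1 j
            rw [if_pos ⟨hj, hjt⟩] at h3
            exact h3
        · by_cases hjs : (j : ℕ) = (t : ℕ) + 1 - u
          · have hje : j = ⟨(t : ℕ) + 1 - u, hk1N⟩ := Fin.ext hjs
            rw [hje, Function.update_self]
            exact hq2
          · rw [Function.update_of_ne (Fin.ne_of_val_ne hjs)]
            have h3 := congrFun hm2 j
            rw [if_pos ⟨hj, hjs⟩] at h3
            exact h3
      · rintro ⟨hx, hs, hy2⟩
        refine ⟨hy2, ?_⟩
        have hq1 : ω.1 t = a := by
          have h3 := hx t (by omega)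
          rwa [Function.update_self] at h3
        have hq2 : ω.2.1 ⟨(t : ℕ) + 1 - u, hk1N⟩ = r := by
          have h3 := hs ⟨(t : ℕ) + 1 - u, hk1N⟩
            (show (t : ℕ) + 1 - u < (t : ℕ) + 1 - u + 1 by omega)
          rwa [Function.update_self] at h3
        have hq3 : ω.2.2 ⟨(t : ℕ) - u, hkfN⟩ = b := by
          have h3 := hy2 ⟨(t : ℕ) - u, hkfN⟩
            (show (t : ℕ) - u < (t : ℕ) + 1 - u by omega)
          rwa [Function.update_self] at h3
        have hm1 : (fun j : Fin N =>
            if (j : ℕ) < (t : ℕ) + 1 ∧ (j : ℕ) ≠ (t : ℕ) then ω.1 j else xf j) = ξ := by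
          funext j
          by_cases hcnd : (j : ℕ) < (t : ℕ) + 1 ∧ (j : ℕ) ≠ (t : ℕ)
          · rw [if_pos hcnd]
            have h3 := hx j hcnd.1
            rwa [Function.update_of_ne (Fin.ne_of_val_ne hcnd.2)] at h3
          · rw [if_neg hcnd]
            exact (hsx j hcnd).symm
        have hm2 : (fun j : Fin (N + 1) =>
            if (j : ℕ) < (t : ℕ) + 1 - u + 1 ∧ (j : ℕ) ≠ (t : ℕ) + 1 - u then ω.2.1 j
            else sf j) = σ := by
          funext j
          by_cases hcnd : (j : ℕ) < (t : ℕ) + 1 - u + 1 ∧ (j : ℕ) ≠ (t : ℕ) + 1 - u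
          · rw [if_pos hcnd]
            have h3 := hs j hcnd.1
            rwa [Function.update_of_ne (Fin.ne_of_val_ne hcnd.2)] at h3
          · rw [if_neg hcnd]
            exact (hss j hcnd).symm
        rw [hm1, hm2, hq1, hq2, hq3]
    exact (sum_ite_congr hiff fun _ => rfl).trans
      ((margT ch src t htu (Function.update ξ t a)
        (Function.update σ ⟨(t : ℕ) + 1 - u, hk1N⟩ r)
        (Function.update yh ⟨(t : ℕ) - u, hkfN⟩ b)).trans
       (Gdec ch src t htu yh ξ σ a r b))
  · rw [if_neg hc]
    apply Finset.sum_eq_zero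
    intro ω _
    rw [if_neg]
    rintro ⟨hY, hcls⟩
    simp only [Prod.mk.injEq] at hcls
    obtain ⟨⟨hm1, hm2⟩, hq1, hq2, hq3⟩ := hcls
    refine hc ⟨fun j hj => ?_, fun j hj => ?_, ?_⟩
    · have h3 := congrFun hm1 j
      rw [if_neg hj] at h3
      exact h3.symm
    · have h3 := congrFun hm2 j
      rw [if_neg hj] at h3
      exact h3.symm
    · have h2 := hY ⟨(t : ℕ) - u, hkfN⟩ (show (t : ℕ) - u < (t : ℕ) + 1 - u by omega)
      rw [Function.update_self] at h2
      exact hq3.symm.trans h2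

private lemma L_AF {X S Y : Type} [Fintype X] [Fintype S] [Fintype Y] {N u : ℕ}
    (ch : NCFSC X S Y) (src : Source X S Y N u) (v : ℕ)
    (t : Fin N) (htu : u ≤ (t : ℕ))
    (yh : Fin N → Y) (xf : Fin N → X) (sf : Fin (N + 1) → S)
    (xg : Fin N → X) (sg : Fin (N + 1) → S) :
    prE (jointP ch src)
        ({ω : Traj X S Y N |
          (∀ j : Fin N, (t : ℕ) ≤ (j : ℕ) + v ∧ (j : ℕ) < (t : ℕ) → ω.1 j = xg j) ∧
            ∀ j : Fin (N + 1),
              (t : ℕ) ≤ (j : ℕ) + v ∧ (j : ℕ) + u ≤ (t : ℕ) → ω.2.1 j = sg j} ∩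
          {ω : Traj X S Y N | ∀ j : Fin N, (j : ℕ) + u + 1 ≤ (t : ℕ) → ω.2.2 j = yh j})
      = ∑ pr : (Fin N → X) × (Fin (N + 1) → S),
          if SPX t xf pr.1 ∧ SPS u (t : ℕ) sf pr.2 ∧ MX v t xg pr.1 ∧ MS u v (t : ℕ) sg pr.2 then
            Gp ch src t yh pr.1 pr.2
          else 0 := by
  have htN : (t : ℕ) < N := t.isLt
  have hkfN : (t : ℕ) - u < N := by omega
  have hk0N : (t : ℕ) - u < N + 1 := by omega
  have hk1N : (t : ℕ) + 1 - u < N + 1 := by omega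
  have step1 : prE (jointP ch src)
      ({ω : Traj X S Y N |
        (∀ j : Fin N, (t : ℕ) ≤ (j : ℕ) + v ∧ (j : ℕ) < (t : ℕ) → ω.1 j = xg j) ∧
          ∀ j : Fin (N + 1),
            (t : ℕ) ≤ (j : ℕ) + v ∧ (j : ℕ) + u ≤ (t : ℕ) → ω.2.1 j = sg j} ∩
        {ω : Traj X S Y N | ∀ j : Fin N, (j : ℕ) + u + 1 ≤ (t : ℕ) → ω.2.2 j = yh j})
      = ∑ ω : Traj X S Y N,
        if (((∀ j : Fin N, (t : ℕ) ≤ (j : ℕ) + v ∧ (j : ℕ) < (t : ℕ) → ω.1 j = xg j) ∧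
            ∀ j : Fin (N + 1),
              (t : ℕ) ≤ (j : ℕ) + v ∧ (j : ℕ) + u ≤ (t : ℕ) → ω.2.1 j = sg j) ∧
           (∀ j : Fin N, (j : ℕ) + u + 1 ≤ (t : ℕ) → ω.2.2 j = yh j))
          then jointP ch src ω else 0 := by
    unfold prE
    refine Finset.sum_congr rfl fun ω _ => ?_
    rw [Set.indicator_apply]
    exact if_congr (by simp only [Set.mem_inter_iff, Set.mem_setOf_eq]) rfl rfl
  rw [step1]
  refine Eq.trans (Eq.trans (sum_partition (jointP ch src)
    (fun ω : Traj X S Y N =>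
      ((∀ j : Fin N, (t : ℕ) ≤ (j : ℕ) + v ∧ (j : ℕ) < (t : ℕ) → ω.1 j = xg j) ∧
        ∀ j : Fin (N + 1),
          (t : ℕ) ≤ (j : ℕ) + v ∧ (j : ℕ) + u ≤ (t : ℕ) → ω.2.1 j = sg j) ∧
       (∀ j : Fin N, (j : ℕ) + u + 1 ≤ (t : ℕ) → ω.2.2 j = yh j))
    (fun ω : Traj X S Y N =>
      ((fun j : Fin N => if (j : ℕ) < (t : ℕ) + 1 ∧ (j : ℕ) ≠ (t : ℕ) then ω.1 j else xf j,
        fun j : Fin (N + 1) =>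
          if (j : ℕ) < (t : ℕ) + 1 - u + 1 ∧ (j : ℕ) ≠ (t : ℕ) + 1 - u then ω.2.1 j else sf j),
       (ω.1 t, ω.2.1 ⟨(t : ℕ) + 1 - u, hk1N⟩, ω.2.2 ⟨(t : ℕ) - u, hkfN⟩))))
    (Fintype.sum_prod_type _)) ?_
  refine Finset.sum_congr rfl fun pr _ => ?_
  obtain ⟨ξ, σ⟩ := pr
  dsimp only
  by_cases hp : SPX t xf ξ ∧ SPS u (t : ℕ) sf σ ∧ MX v t xg ξ ∧ MS u v (t : ℕ) sg σ
  · rw [if_pos hp]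
    obtain ⟨hsx, hss, hmx, hms⟩ := hp
    trans (∑ q : X × S × Y, Gp ch src t yh ξ σ * src.pol t ξ σ yh q.1 *
      ch.W q.2.2 q.2.1 (Function.update ξ t q.1 ⟨(t : ℕ) - u, hkfN⟩) (σ ⟨(t : ℕ) - u, hk0N⟩))
    · refine Finset.sum_congr rfl fun q (_ : q ∈ Finset.univ) => ?_
      have hiff : ∀ ω : Traj X S Y N,
          ((((∀ j : Fin N, (t : ℕ) ≤ (j : ℕ) + v ∧ (j : ℕ) < (t : ℕ) → ω.1 j = xg j) ∧
              ∀ j : Fin (N + 1),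
                (t : ℕ) ≤ (j : ℕ) + v ∧ (j : ℕ) + u ≤ (t : ℕ) → ω.2.1 j = sg j) ∧
             (∀ j : Fin N, (j : ℕ) + u + 1 ≤ (t : ℕ) → ω.2.2 j = yh j)) ∧
            ((fun j : Fin N => if (j : ℕ) < (t : ℕ) + 1 ∧ (j : ℕ) ≠ (t : ℕ) then ω.1 j else xf j,
              fun j : Fin (N + 1) =>
                if (j : ℕ) < (t : ℕ) + 1 - u + 1 ∧ (j : ℕ) ≠ (t : ℕ) + 1 - u then ω.2.1 j
                else sf j),
             (ω.1 t, ω.2.1 ⟨(t : ℕ) + 1 - u, hk1N⟩, ω.2.2 ⟨(t : ℕ) - u, hkfN⟩))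
              = ((ξ, σ), q))
          ↔ ((∀ j : Fin N, (j : ℕ) < (t : ℕ) + 1 → ω.1 j = Function.update ξ t q.1 j) ∧
             (∀ j : Fin (N + 1), (j : ℕ) < (t : ℕ) + 1 - u + 1 →
                ω.2.1 j = Function.update σ ⟨(t : ℕ) + 1 - u, hk1N⟩ q.2.1 j) ∧
             (∀ j : Fin N, (j : ℕ) < (t : ℕ) + 1 - u →
                ω.2.2 j = Function.update yh ⟨(t : ℕ) - u, hkfN⟩ q.2.2 j)) := by
        intro ω
        constructor
        · rintro ⟨⟨⟨hax, has⟩, hF⟩, hcls⟩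
          simp only [Prod.ext_iff] at hcls
          obtain ⟨⟨hm1, hm2⟩, hq1, hq2, hq3⟩ := hcls
          refine ⟨fun j hj => ?_, fun j hj => ?_, fun j hj => ?_⟩
          · by_cases hjt : (j : ℕ) = (t : ℕ)
            · have hje : j = t := Fin.ext hjt
              rw [hje, Function.update_self]
              exact hq1
            · rw [Function.update_of_ne (Fin.ne_of_val_ne hjt)]
              have h3 := congrFun hm1 j
              rw [if_pos ⟨hj, hjt⟩] at h3
              exact h3
          · by_cases hjs : (j : ℕ) = (t : ℕ) + 1 - u
            · have hje : j = ⟨(t : ℕ) + 1 - u, hk1N⟩ := Fin.ext hjs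
              rw [hje, Function.update_self]
              exact hq2
            · rw [Function.update_of_ne (Fin.ne_of_val_ne hjs)]
              have h3 := congrFun hm2 j
              rw [if_pos ⟨hj, hjs⟩] at h3
              exact h3
          · by_cases hjy : (j : ℕ) = (t : ℕ) - u
            · have hje : j = ⟨(t : ℕ) - u, hkfN⟩ := Fin.ext hjy
              rw [hje, Function.update_self]
              exact hq3
            · rw [Function.update_of_ne (Fin.ne_of_val_ne hjy)]
              exact hF j (by omega)
        · rintro ⟨hx, hs, hy2⟩
          have hq1 : ω.1 t = q.1 := by
            have h3 := hx t (by omega)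
            rwa [Function.update_self] at h3
          have hq2 : ω.2.1 ⟨(t : ℕ) + 1 - u, hk1N⟩ = q.2.1 := by
            have h3 := hs ⟨(t : ℕ) + 1 - u, hk1N⟩
              (show (t : ℕ) + 1 - u < (t : ℕ) + 1 - u + 1 by omega)
            rwa [Function.update_self] at h3
          have hq3 : ω.2.2 ⟨(t : ℕ) - u, hkfN⟩ = q.2.2 := by
            have h3 := hy2 ⟨(t : ℕ) - u, hkfN⟩
              (show (t : ℕ) - u < (t : ℕ) + 1 - u by omega)
            rwa [Function.update_self] at h3
          refine ⟨⟨⟨fun j hw => ?_, fun j hw => ?_⟩, fun j hj => ?_⟩, ?_⟩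
          · have h3 := hx j (by omega)
            rw [Function.update_of_ne (Fin.ne_of_val_ne (show (j : ℕ) ≠ (t : ℕ) by omega))] at h3
            exact h3.trans (hmx j hw)
          · have h3 := hs j (by omega)
            rw [Function.update_of_ne
              (Fin.ne_of_val_ne (show (j : ℕ) ≠ (t : ℕ) + 1 - u by omega))] at h3
            exact h3.trans (hms j hw)
          · have h3 := hy2 j (by omega)
            rwa [Function.update_of_ne
              (Fin.ne_of_val_ne (show (j : ℕ) ≠ (t : ℕ) - u by omega))] at h3
          · have hm1 : (fun j : Fin N =>
                if (j : ℕ) < (t : ℕ) + 1 ∧ (j : ℕ) ≠ (t : ℕ) then ω.1 j else xf j) = ξ := by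
              funext j
              by_cases hcnd : (j : ℕ) < (t : ℕ) + 1 ∧ (j : ℕ) ≠ (t : ℕ)
              · rw [if_pos hcnd]
                have h3 := hx j hcnd.1
                rwa [Function.update_of_ne (Fin.ne_of_val_ne hcnd.2)] at h3
              · rw [if_neg hcnd]
                exact (hsx j hcnd).symm
            have hm2 : (fun j : Fin (N + 1) =>
                if (j : ℕ) < (t : ℕ) + 1 - u + 1 ∧ (j : ℕ) ≠ (t : ℕ) + 1 - u then ω.2.1 j
                else sf j) = σ := by
              funext j
              by_cases hcnd : (j : ℕ) < (t : ℕ) + 1 - u + 1 ∧ (j : ℕ) ≠ (t : ℕ) + 1 - u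
              · rw [if_pos hcnd]
                have h3 := hs j hcnd.1
                rwa [Function.update_of_ne (Fin.ne_of_val_ne hcnd.2)] at h3
              · rw [if_neg hcnd]
                exact (hss j hcnd).symm
            simp only [Prod.ext_iff]
            exact ⟨⟨hm1, hm2⟩, hq1, hq2, hq3⟩
      exact (sum_ite_congr hiff fun _ => rfl).trans
        ((margT ch src t htu (Function.update ξ t q.1)
          (Function.update σ ⟨(t : ℕ) + 1 - u, hk1N⟩ q.2.1)
          (Function.update yh ⟨(t : ℕ) - u, hkfN⟩ q.2.2)).trans
         (Gdec ch src t htu yh ξ σ q.1 q.2.1 q.2.2))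
    · refine Eq.trans (Finset.sum_congr rfl fun q (_ : q ∈ Finset.univ) =>
        (mul_assoc (Gp ch src t yh ξ σ) (src.pol t ξ σ yh q.1)
          (ch.W q.2.2 q.2.1 (Function.update ξ t q.1 ⟨(t : ℕ) - u, hkfN⟩)
            (σ ⟨(t : ℕ) - u, hk0N⟩)))) ?_
      rw [← Finset.mul_sum,
        polW_sum_upd ch src t t ⟨(t : ℕ) - u, hkfN⟩ ξ σ yh (σ ⟨(t : ℕ) - u, hk0N⟩), mul_one]
  · rw [if_neg hp]
    apply Finset.sum_eq_zero
    intro q _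
    apply Finset.sum_eq_zero
    intro ω _
    rw [if_neg]
    rintro ⟨⟨⟨hax, has⟩, hF⟩, hcls⟩
    simp only [Prod.mk.injEq] at hcls
    obtain ⟨⟨hm1, hm2⟩, hq1, hq2, hq3⟩ := hcls
    refine hp ⟨fun j hj => ?_, fun j hj => ?_, fun j hw => ?_, fun j hw => ?_⟩
    · have h3 := congrFun hm1 j
      rw [if_neg hj] at h3
      exact h3.symm
    · have h3 := congrFun hm2 j
      rw [if_neg hj] at h3
      exact h3.symm
    · have h3 := congrFun hm1 j
      rw [if_pos ⟨by omega, by omega⟩] at h3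
      exact h3.symm.trans (hax j hw)
    · have h3 := congrFun hm2 j
      rw [if_pos ⟨by omega, by omega⟩] at h3
      exact h3.symm.trans (has j hw)

private lemma keyId {X S Y : Type} [Fintype X] [Fintype S] [Fintype Y] {N u : ℕ}
    (ch : NCFSC X S Y) (src : Source X S Y N u) (v : ℕ) (huv : u ≤ v)
    (hM : IsMarkov v src) (t : Fin N) (htu : u ≤ (t : ℕ)) (yh : Fin N → Y)
    (xf : Fin N → X) (sf : Fin (N + 1) → S) (y : Y) :
    prE (jointP ch src)
        ({ω : Traj X S Y N | ω.2.2 ⟨(t : ℕ) - u, Nat.lt_of_le_of_lt (Nat.sub_le _ _) t.isLt⟩ = y} ∩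
          {ω : Traj X S Y N | ∀ j : Fin N, (j : ℕ) + u + 1 ≤ (t : ℕ) → ω.2.2 j = yh j})
      = ∑ xg : Fin N → X, ∑ sg : Fin (N + 1) → S,
          if (∀ j : Fin N, ¬((t : ℕ) ≤ (j : ℕ) + v ∧ (j : ℕ) ≤ (t : ℕ)) → xg j = xf j) ∧
              (∀ j : Fin (N + 1),
                ¬((t : ℕ) ≤ (j : ℕ) + v ∧ (j : ℕ) + u ≤ (t : ℕ) + 1) → sg j = sf j) then
            prE (jointP ch src)
                ({ω : Traj X S Y N |
                  (∀ j : Fin N, (t : ℕ) ≤ (j : ℕ) + v ∧ (j : ℕ) < (t : ℕ) → ω.1 j = xg j) ∧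
                    ∀ j : Fin (N + 1),
                      (t : ℕ) ≤ (j : ℕ) + v ∧ (j : ℕ) + u ≤ (t : ℕ) → ω.2.1 j = sg j} ∩
                  {ω : Traj X S Y N | ∀ j : Fin N, (j : ℕ) + u + 1 ≤ (t : ℕ) → ω.2.2 j = yh j}) *
              src.pol t xg sg yh (xg t) *
              ch.W y (sg ⟨(t : ℕ) + 1 - u, Nat.lt_of_le_of_lt (Nat.sub_le _ _) (Nat.succ_lt_succ t.isLt)⟩)
                (xg ⟨(t : ℕ) - u, Nat.lt_of_le_of_lt (Nat.sub_le _ _) t.isLt⟩)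
                (sg ⟨(t : ℕ) - u, Nat.lt_succ_of_lt (Nat.lt_of_le_of_lt (Nat.sub_le _ _) t.isLt)⟩)
          else 0 := by
  have htN : (t : ℕ) < N := t.isLt
  have hkfN : (t : ℕ) - u < N := by omega
  have hk0N : (t : ℕ) - u < N + 1 := by omega
  have hk1N : (t : ℕ) + 1 - u < N + 1 := by omega
  rw [L_EF ch src t htu yh xf sf y]
  refine Eq.trans (Eq.trans (sum_partition
    (fun c : ((Fin N → X) × (Fin (N + 1) → S)) × (X × S × Y) =>
      Gp ch src t yh c.1.1 c.1.2 * src.pol t c.1.1 c.1.2 yh c.2.1 *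
        ch.W c.2.2.2 c.2.2.1
          (Function.update c.1.1 t c.2.1 ⟨(t : ℕ) - u, hkfN⟩) (c.1.2 ⟨(t : ℕ) - u, hk0N⟩))
    (fun c => SPX t xf c.1.1 ∧ SPS u (t : ℕ) sf c.1.2 ∧ c.2.2.2 = y)
    (fun c => (Function.update
        (fun j : Fin N => if (t : ℕ) ≤ (j : ℕ) + v ∧ (j : ℕ) < (t : ℕ) then c.1.1 j else xf j)
        t c.2.1,
      Function.update
        (fun j : Fin (N + 1) =>
          if (t : ℕ) ≤ (j : ℕ) + v ∧ (j : ℕ) + u ≤ (t : ℕ) then c.1.2 j else sf j)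
        ⟨(t : ℕ) + 1 - u, hk1N⟩ c.2.2.1)))
    (Fintype.sum_prod_type _)) ?_
  refine Finset.sum_congr rfl fun xg _ => ?_
  refine Finset.sum_congr rfl fun sg _ => ?_
  rw [L_AF ch src v t htu yh xf sf xg sg]
  by_cases hD : (∀ j : Fin N, ¬((t : ℕ) ≤ (j : ℕ) + v ∧ (j : ℕ) ≤ (t : ℕ)) → xg j = xf j) ∧
      (∀ j : Fin (N + 1), ¬((t : ℕ) ≤ (j : ℕ) + v ∧ (j : ℕ) + u ≤ (t : ℕ) + 1) → sg j = sf j)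
  · rw [if_pos hD]
    obtain ⟨hdx, hds⟩ := hD
    trans (∑ c : ((Fin N → X) × (Fin (N + 1) → S)) × (X × S × Y),
      if (SPX t xf c.1.1 ∧ SPS u (t : ℕ) sf c.1.2 ∧ MX v t xg c.1.1 ∧ MS u v (t : ℕ) sg c.1.2) ∧
          c.2 = (xg t, sg ⟨(t : ℕ) + 1 - u, hk1N⟩, y) then
        Gp ch src t yh c.1.1 c.1.2 *
          (src.pol t xg sg yh (xg t) *
            ch.W y (sg ⟨(t : ℕ) + 1 - u, hk1N⟩) (xg ⟨(t : ℕ) - u, hkfN⟩)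
              (sg ⟨(t : ℕ) - u, hk0N⟩))
      else 0)
    · refine Finset.sum_congr rfl fun c _ => ?_
      have hiffc :
          ((SPX t xf c.1.1 ∧ SPS u (t : ℕ) sf c.1.2 ∧ c.2.2.2 = y) ∧
            (Function.update
              (fun j : Fin N =>
                if (t : ℕ) ≤ (j : ℕ) + v ∧ (j : ℕ) < (t : ℕ) then c.1.1 j else xf j)
              t c.2.1,
            Function.update
              (fun j : Fin (N + 1) =>
                if (t : ℕ) ≤ (j : ℕ) + v ∧ (j : ℕ) + u ≤ (t : ℕ) then c.1.2 j else sf j)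
              ⟨(t : ℕ) + 1 - u, hk1N⟩ c.2.2.1) = (xg, sg))
          ↔ ((SPX t xf c.1.1 ∧ SPS u (t : ℕ) sf c.1.2 ∧ MX v t xg c.1.1 ∧
              MS u v (t : ℕ) sg c.1.2) ∧
             c.2 = (xg t, sg ⟨(t : ℕ) + 1 - u, hk1N⟩, y)) := by
        constructor
        · rintro ⟨⟨hsx, hss, hby⟩, hcls⟩
          simp only [Prod.ext_iff] at hcls
          obtain ⟨hcx, hcs⟩ := hcls
          have hmx : MX v t xg c.1.1 := by
            intro j hw
            have h3 := congrFun hcx j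
            rw [Function.update_of_ne
              (Fin.ne_of_val_ne (show (j : ℕ) ≠ (t : ℕ) by omega))] at h3
            rw [if_pos hw] at h3
            exact h3
          have hms : MS u v (t : ℕ) sg c.1.2 := by
            intro j hw
            have h3 := congrFun hcs j
            rw [Function.update_of_ne
              (Fin.ne_of_val_ne (show (j : ℕ) ≠ (t : ℕ) + 1 - u by omega))] at h3
            rw [if_pos hw] at h3
            exact h3
          have ha : c.2.1 = xg t := by
            have h3 := congrFun hcx t
            rwa [Function.update_self] at h3
          have hr : c.2.2.1 = sg ⟨(t : ℕ) + 1 - u, hk1N⟩ := by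
            have h3 := congrFun hcs ⟨(t : ℕ) + 1 - u, hk1N⟩
            rwa [Function.update_self] at h3
          refine ⟨⟨hsx, hss, hmx, hms⟩, ?_⟩
          simp only [Prod.ext_iff]
          exact ⟨ha, hr, hby⟩
        · rintro ⟨⟨hsx, hss, hmx, hms⟩, hc2⟩
          have ha : c.2.1 = xg t := by rw [hc2]
          have hr : c.2.2.1 = sg ⟨(t : ℕ) + 1 - u, hk1N⟩ := by rw [hc2]
          have hb : c.2.2.2 = y := by rw [hc2]
          refine ⟨⟨hsx, hss, hb⟩, ?_⟩
          simp only [Prod.ext_iff]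
          constructor
          · funext j
            by_cases hjt : (j : ℕ) = (t : ℕ)
            · have hje : j = t := Fin.ext hjt
              rw [hje, Function.update_self]
              exact ha
            · rw [Function.update_of_ne (Fin.ne_of_val_ne hjt)]
              by_cases hw : (t : ℕ) ≤ (j : ℕ) + v ∧ (j : ℕ) < (t : ℕ)
              · rw [if_pos hw]
                exact hmx j hw
              · rw [if_neg hw]
                exact (hdx j (by omega)).symm
          · funext j
            by_cases hjs : (j : ℕ) = (t : ℕ) + 1 - u
            · have hje : j = ⟨(t : ℕ) + 1 - u, hk1N⟩ := Fin.ext hjs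
              rw [hje, Function.update_self]
              exact hr
            · rw [Function.update_of_ne (Fin.ne_of_val_ne hjs)]
              by_cases hw : (t : ℕ) ≤ (j : ℕ) + v ∧ (j : ℕ) + u ≤ (t : ℕ)
              · rw [if_pos hw]
                exact hms j hw
              · rw [if_neg hw]
                exact (hds j (by omega)).symm
      by_cases h2 : (SPX t xf c.1.1 ∧ SPS u (t : ℕ) sf c.1.2 ∧ MX v t xg c.1.1 ∧
          MS u v (t : ℕ) sg c.1.2) ∧ c.2 = (xg t, sg ⟨(t : ℕ) + 1 - u, hk1N⟩, y)
      · rw [if_pos (hiffc.mpr h2), if_pos h2]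
        obtain ⟨⟨hsx, hss, hmx, hms⟩, hc2⟩ := h2
        have ha : c.2.1 = xg t := by rw [hc2]
        have hr : c.2.2.1 = sg ⟨(t : ℕ) + 1 - u, hk1N⟩ := by rw [hc2]
        have hb : c.2.2.2 = y := by rw [hc2]
        have hpol : src.pol t c.1.1 c.1.2 yh = src.pol t xg sg yh :=
          hM t c.1.1 xg c.1.2 sg yh yh (fun j hw => hmx j hw) (fun j hw => hms j hw)
            (fun j _ => rfl)
        rw [hpol, ha, hr, hb]
        have hupd : Function.update c.1.1 t (xg t) ⟨(t : ℕ) - u, hkfN⟩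
            = xg ⟨(t : ℕ) - u, hkfN⟩ := by
          by_cases hue : (t : ℕ) - u = (t : ℕ)
          · have hkt : (⟨(t : ℕ) - u, hkfN⟩ : Fin N) = t := Fin.ext hue
            rw [hkt, Function.update_self]
          · rw [Function.update_of_ne (Fin.ne_of_val_ne hue)]
            exact hmx ⟨(t : ℕ) - u, hkfN⟩
              ⟨show (t : ℕ) ≤ (t : ℕ) - u + v by omega,
               show (t : ℕ) - u < (t : ℕ) by omega⟩
        have hs0 : c.1.2 ⟨(t : ℕ) - u, hk0N⟩ = sg ⟨(t : ℕ) - u, hk0N⟩ :=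
          hms ⟨(t : ℕ) - u, hk0N⟩
            ⟨show (t : ℕ) ≤ (t : ℕ) - u + v by omega,
             show (t : ℕ) - u + u ≤ (t : ℕ) by omega⟩
        rw [hupd, hs0]
        ring
      · rw [if_neg (fun h1 => h2 (hiffc.mp h1)), if_neg h2]
    · refine Eq.trans (Fintype.sum_prod_type _) ?_
      trans (∑ pr : (Fin N → X) × (Fin (N + 1) → S),
        (if SPX t xf pr.1 ∧ SPS u (t : ℕ) sf pr.2 ∧ MX v t xg pr.1 ∧
            MS u v (t : ℕ) sg pr.2 then
          Gp ch src t yh pr.1 pr.2 else 0) *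
        (src.pol t xg sg yh (xg t) *
          ch.W y (sg ⟨(t : ℕ) + 1 - u, hk1N⟩) (xg ⟨(t : ℕ) - u, hkfN⟩)
            (sg ⟨(t : ℕ) - u, hk0N⟩)))
      · refine Finset.sum_congr rfl fun pr _ => ?_
        by_cases hP : SPX t xf pr.1 ∧ SPS u (t : ℕ) sf pr.2 ∧ MX v t xg pr.1 ∧
            MS u v (t : ℕ) sg pr.2
        · refine Eq.trans (sum_ite_congr (Q := fun q : X × S × Y =>
            q = (xg t, sg ⟨(t : ℕ) + 1 - u, hk1N⟩, y)) (i2 := fun _ => inferInstance)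
            (fun q => Iff.intro (fun h => h.2) (fun h => ⟨hP, h⟩)) (fun _ => rfl)) ?_
          rw [Finset.sum_ite_eq' Finset.univ
            (xg t, sg ⟨(t : ℕ) + 1 - u, hk1N⟩, y)
            (fun _ => Gp ch src t yh pr.1 pr.2 *
              (src.pol t xg sg yh (xg t) *
                ch.W y (sg ⟨(t : ℕ) + 1 - u, hk1N⟩) (xg ⟨(t : ℕ) - u, hkfN⟩)
                  (sg ⟨(t : ℕ) - u, hk0N⟩)))]
          rw [if_pos (Finset.mem_univ _), if_pos hP]
        · rw [if_neg hP, zero_mul]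
          apply Finset.sum_eq_zero
          intro q _
          rw [if_neg]
          rintro ⟨h1, _⟩
          exact hP h1
      · rw [← Finset.sum_mul, ← mul_assoc]
  · rw [if_neg hD]
    apply Finset.sum_eq_zero
    intro c _
    rw [if_neg]
    rintro ⟨⟨hsx, hss, hby⟩, hcls⟩
    simp only [Prod.ext_iff] at hcls
    obtain ⟨hcx, hcs⟩ := hcls
    refine hD ⟨fun j hj => ?_, fun j hj => ?_⟩
    · have h3 := congrFun hcx j
      rw [Function.update_of_ne (Fin.ne_of_val_ne (show (j : ℕ) ≠ (t : ℕ) by omega))] at h3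
      rw [if_neg (show ¬((t : ℕ) ≤ (j : ℕ) + v ∧ (j : ℕ) < (t : ℕ)) by omega)] at h3
      exact h3.symm
    · have h3 := congrFun hcs j
      rw [Function.update_of_ne
        (Fin.ne_of_val_ne (show (j : ℕ) ≠ (t : ℕ) + 1 - u by omega))] at h3
      rw [if_neg (show ¬((t : ℕ) ≤ (j : ℕ) + v ∧ (j : ℕ) + u ≤ (t : ℕ)) by omega)] at h3
      exact h3.symm

/-- **law of the system disturbance, equation (eqnytu).**
For a non-controllable FSC with a source in `𝒫_v(u,u)` (`0 ≤ u ≤ v`), a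
time `u+1 ≤ t ≤ N` (0-based: `u ≤ (t:ℕ)`), and a positive-probability
output history `y^{t-u-1}`, for every `y ∈ 𝒴`:
`Pr(Y_{t-u} = y | Y^{t-u-1} = y^{t-u-1})
  = Σ_{x_{t-v}^t, s_{t-v-1}^{t-u}} α_{t-1}(x_{t-v}^{t-1}, s_{t-v-1}^{t-u-1})
      · π_t(x_t | x_{t-v}^{t-1}, s_{t-v-1}^{t-u-1}, y^{t-u-1})
      · W(y, s_{t-u} | x_{t-u}, s_{t-u-1})`.
The sum over the windows `x_{t-v}^t`, `s_{t-v-1}^{t-u}` is realized by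
summing over full functions constrained to agree with an arbitrary base
point `(xf, sf)` off these windows.  In particular, the conditional law of
the disturbance `Y_{t-u}` is determined by `α_{t-1}`, the time-`t` policy
and the channel law alone. -/
theorem statement11 {X S Y : Type} [Fintype X] [Fintype S] [Fintype Y] {N u : ℕ}
    (ch : NCFSC X S Y) (src : Source X S Y N u) (v : ℕ) (huv : u ≤ v)
    (hM : IsMarkov v src)
    (t : Fin N) (htu : u ≤ (t : ℕ)) (yh : Fin N → Y)
    (hpos : 0 < prE (jointP ch src)
      {ω : Traj X S Y N | ∀ j : Fin N, (j : ℕ) + u + 1 ≤ (t : ℕ) → ω.2.2 j = yh j})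
    (xf : Fin N → X) (sf : Fin (N + 1) → S) (y : Y) :
    condPr (jointP ch src)
        {ω : Traj X S Y N | ω.2.2 ⟨(t : ℕ) - u, by have := t.isLt; omega⟩ = y}
        {ω : Traj X S Y N | ∀ j : Fin N, (j : ℕ) + u + 1 ≤ (t : ℕ) → ω.2.2 j = yh j} =
      ∑ xg : Fin N → X, ∑ sg : Fin (N + 1) → S,
        if (∀ j : Fin N, ¬((t : ℕ) ≤ (j : ℕ) + v ∧ (j : ℕ) ≤ (t : ℕ)) → xg j = xf j) ∧
            (∀ j : Fin (N + 1),
              ¬((t : ℕ) ≤ (j : ℕ) + v ∧ (j : ℕ) + u ≤ (t : ℕ) + 1) → sg j = sf j) then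
          condPr (jointP ch src)
              {ω : Traj X S Y N |
                (∀ j : Fin N, (t : ℕ) ≤ (j : ℕ) + v ∧ (j : ℕ) < (t : ℕ) → ω.1 j = xg j) ∧
                  ∀ j : Fin (N + 1),
                    (t : ℕ) ≤ (j : ℕ) + v ∧ (j : ℕ) + u ≤ (t : ℕ) → ω.2.1 j = sg j}
              {ω : Traj X S Y N | ∀ j : Fin N, (j : ℕ) + u + 1 ≤ (t : ℕ) → ω.2.2 j = yh j} *
            src.pol t xg sg yh (xg t) *
            ch.W y (sg ⟨(t : ℕ) + 1 - u, by have := t.isLt; omega⟩)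
              (xg ⟨(t : ℕ) - u, by have := t.isLt; omega⟩)
              (sg ⟨(t : ℕ) - u, by have := t.isLt; omega⟩)
        else 0 := by
  classical
  simp only [condPr]
  rw [keyId ch src v huv hM t htu yh xf sf y]
  rw [Finset.sum_div]
  refine Finset.sum_congr rfl fun xg _ => ?_
  rw [Finset.sum_div]
  refine Finset.sum_congr rfl fun sg _ => ?_
  by_cases hD : (∀ j : Fin N, ¬((t : ℕ) ≤ (j : ℕ) + v ∧ (j : ℕ) ≤ (t : ℕ)) → xg j = xf j) ∧
      (∀ j : Fin (N + 1), ¬((t : ℕ) ≤ (j : ℕ) + v ∧ (j : ℕ) + u ≤ (t : ℕ) + 1) → sg j = sf j)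
  · rw [if_pos hD, if_pos hD, div_mul_eq_mul_div, div_mul_eq_mul_div]
  · rw [if_neg hD, if_neg hD, zero_div]


end FSCPaper
end
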